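/- Strong LP duality for the Benders subproblem: let A be a real m×n matrix, d ∈ ℝ^m, and c ∈ ℝ^n. If the primal feasible set {x ∈ ℝ^n | A x = d, x ≥ 0} is nonempty and the objective c · x is bounded below on it, and the dual feasible set {α ∈ ℝ^m | Aᵀ α ≤ c} is nonempty, then inf {c · x | A x = d, x ≥ 0} = sup {α · d | Aᵀ α ≤ c}. -/

import Mathlib

open Matrix Finset

/-- The cone generated by a finite family of vectors. -/
def coneSet {E : Type*} [AddCommMonoid E] [Module ℝ E] {ι : Type*} [Fintype ι]
    (v : ι → E) : Set E :=
  {y | ∃ c : ι → ℝ, (∀ i, 0 ≤ c i) ∧ y = ∑ i, c i • v i}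

lemma coneSet_comp_equiv {E : Type*} [AddCommMonoid E] [Module ℝ E]
    {ι κ : Type*} [Fintype ι] [Fintype κ] (e : ι ≃ κ) (v : κ → E) :
    coneSet (v ∘ e) = coneSet v := by
  ext y
  constructor
  · rintro ⟨c, hc, rfl⟩
    refine ⟨c ∘ e.symm, fun j => hc _, ?_⟩
    rw [← Equiv.sum_comp e (fun j => (c ∘ e.symm) j • v j)]
    simp
  · rintro ⟨c, hc, rfl⟩
    refine ⟨c ∘ e, fun j => hc _, ?_⟩
    rw [← Equiv.sum_comp e (fun j => c j • v j)]
    simp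

lemma isClosed_coneSet_fin {m : ℕ} :
    ∀ (k : ℕ) (v : Fin k → (Fin m → ℝ)), IsClosed (coneSet v) := by
  intro k
  induction k with
  | zero =>
    intro v
    have : coneSet v = {0} := by
      ext y
      constructor
      · rintro ⟨c, _, rfl⟩; simp
      · rintro rfl; exact ⟨0, fun i => le_rfl, by simp⟩
    rw [this]; exact isClosed_singleton
  | succ k ih =>
    intro v
    by_cases h : LinearIndependent ℝ v
    · -- image of the closed nonneg orthant under an injective linear map
      set f : (Fin (k+1) → ℝ) →ₗ[ℝ] (Fin m → ℝ) := Fintype.linearCombination ℝ v with hf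
      have hker : LinearMap.ker f = ⊥ := by
        rw [LinearMap.ker_eq_bot']
        intro g hg
        have := (Fintype.linearIndependent_iff.mp h) g ?_
        · funext i; exact this i
        · simpa [hf, Fintype.linearCombination_apply] using hg
      have hemb := LinearMap.isClosedEmbedding_of_injective (E := Fin (k+1) → ℝ)
        (F := Fin m → ℝ) (f := f) hker
      have horth : IsClosed {c : Fin (k+1) → ℝ | ∀ i, 0 ≤ c i} := by
        have : {c : Fin (k+1) → ℝ | ∀ i, 0 ≤ c i}
            = ⋂ i, (fun c : Fin (k+1) → ℝ => c i) ⁻¹' Set.Ici 0 := by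
          ext c; simp [Set.mem_iInter]
        rw [this]
        exact isClosed_iInter fun i => isClosed_Ici.preimage (continuous_apply i)
      have himg : coneSet v = f '' {c | ∀ i, 0 ≤ c i} := by
        ext y
        constructor
        · rintro ⟨c, hc, rfl⟩
          exact ⟨c, hc, by simp [hf, Fintype.linearCombination_apply]⟩
        · rintro ⟨c, hc, rfl⟩
          exact ⟨c, hc, by simp [hf, Fintype.linearCombination_apply]⟩
      rw [himg]
      exact hemb.isClosedMap _ horth
    · -- dependent case: delete an index
      obtain ⟨w, hwsum, hpos⟩ : ∃ w : Fin (k+1) → ℝ,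
          ∑ i, w i • v i = 0 ∧ ∃ i, 0 < w i := by
        rw [Fintype.linearIndependent_iff] at h
        push_neg at h
        obtain ⟨g, hg, i, hi⟩ := h
        rcases (Ne.lt_or_gt hi) with hneg | hposi
        · exact ⟨-g, by simp only [Pi.neg_apply, neg_smul, Finset.sum_neg_distrib, hg, neg_zero],
            i, by simpa using hneg⟩
        · exact ⟨g, hg, i, hposi⟩
      have hunion : coneSet v = ⋃ i : Fin (k+1), coneSet (v ∘ i.succAbove) := by
        ext y
        constructor
        · rintro ⟨c, hc, rfl⟩
          obtain ⟨i₀, hi₀S, hmin⟩ := Finset.exists_min_image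
            (Finset.univ.filter fun j => 0 < w j) (fun j => c j / w j)
            (by obtain ⟨i, hi⟩ := hpos; exact ⟨i, by simp [hi]⟩)
          have hw₀ : 0 < w i₀ := (Finset.mem_filter.mp hi₀S).2
          set t : ℝ := c i₀ / w i₀ with htdef
          have ht : 0 ≤ t := div_nonneg (hc i₀) hw₀.le
          set c' : Fin (k+1) → ℝ := fun j => c j - t * w j with hc'def
          have hc' : ∀ j, 0 ≤ c' j := by
            intro j
            by_cases hwj : 0 < w j
            · have := hmin j (by simp [hwj])
              have : t * w j ≤ c j := (le_div_iff₀ hwj).mp this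
              simpa [hc'def] using sub_nonneg.mpr this
            · have : t * w j ≤ 0 := mul_nonpos_of_nonneg_of_nonpos ht (not_lt.mp hwj)
              have := le_trans this (hc j)
              simpa [hc'def] using sub_nonneg.mpr this
          have hzero : c' i₀ = 0 := by
            simp [hc'def, htdef, div_mul_cancel₀ _ hw₀.ne']
          have hsum' : ∑ j, c' j • v j = ∑ j, c j • v j := by
            simp only [hc'def, sub_smul, Finset.sum_sub_distrib, mul_smul]
            rw [← Finset.smul_sum, hwsum, smul_zero, sub_zero]
          refine Set.mem_iUnion.mpr ⟨i₀, c' ∘ i₀.succAbove, fun j => hc' _, ?_⟩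
          have := Fin.sum_univ_succAbove (fun j => c' j • v j) i₀
          rw [hzero] at this
          simp only [zero_smul, zero_add] at this
          rw [← hsum', this]
          rfl
        · intro hy
          obtain ⟨i, c, hc, rfl⟩ := Set.mem_iUnion.mp hy
          refine ⟨(Fin.insertNth i (0:ℝ) c : Fin (k+1) → ℝ), ?_, ?_⟩
          · intro j
            rcases eq_or_ne j i with rfl | hne
            · simp
            · obtain ⟨j', rfl⟩ := Fin.exists_succAbove_eq hne
              simpa using hc j'
          · rw [Fin.sum_univ_succAbove
              (fun j => (Fin.insertNth i (0:ℝ) c : Fin (k+1) → ℝ) j • v j) i]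
            simp
      rw [hunion]
      exact isClosed_iUnion_of_finite fun i => ih _

lemma isClosed_coneSet {m : ℕ} {ι : Type*} [Fintype ι] (v : ι → (Fin m → ℝ)) :
    IsClosed (coneSet v) := by
  have := coneSet_comp_equiv (Fintype.equivFin ι).symm v
  rw [← this]
  exact isClosed_coneSet_fin _ _

lemma convex_coneSet {m : ℕ} {ι : Type*} [Fintype ι] (v : ι → (Fin m → ℝ)) :
    Convex ℝ (coneSet v) := by
  rintro y ⟨cy, hcy, rfl⟩ z ⟨cz, hcz, rfl⟩ a b ha hb _
  refine ⟨fun i => a * cy i + b * cz i,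
    fun i => add_nonneg (mul_nonneg ha (hcy i)) (mul_nonneg hb (hcz i)), ?_⟩
  simp [add_smul, smul_smul, Finset.sum_add_distrib, Finset.smul_sum]

lemma farkas {m : ℕ} {ι : Type*} [Fintype ι] (v : ι → (Fin m → ℝ)) (b : Fin m → ℝ)
    (h : b ∉ coneSet v) :
    ∃ y : Fin m → ℝ, (∀ i, y ⬝ᵥ v i ≤ 0) ∧ 0 < y ⬝ᵥ b := by
  classical
  obtain ⟨f, u, hfu, hub⟩ :=
    geometric_hahn_banach_closed_point (convex_coneSet v) (isClosed_coneSet v) h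
  have h0 : (0 : Fin m → ℝ) ∈ coneSet v := ⟨0, fun i => le_refl 0, by simp⟩
  have hu : (0:ℝ) < u := by simpa using hfu 0 h0
  have hle : ∀ z ∈ coneSet v, f z ≤ 0 := by
    intro z hz
    by_contra hpos
    push_neg at hpos
    have hmem : ((u+1)/f z) • z ∈ coneSet v := by
      obtain ⟨c, hc, hzc⟩ := hz
      refine ⟨fun i => ((u+1)/f z) * c i,
        fun i => mul_nonneg (div_nonneg (by linarith) hpos.le) (hc i), ?_⟩
      rw [hzc]
      simp [Finset.smul_sum, smul_smul]
    have := hfu _ hmem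
    rw [f.map_smul, smul_eq_mul, div_mul_cancel₀ _ hpos.ne'] at this
    linarith
  set y : Fin m → ℝ := fun i => f (Pi.single i 1) with hy
  have hrepr : ∀ z : Fin m → ℝ, y ⬝ᵥ z = f z := by
    intro z
    have hz : z = ∑ i, z i • (Pi.single i (1:ℝ) : Fin m → ℝ) := by
      funext j
      simp [Finset.sum_apply, Pi.single_apply, mul_comm]
    conv_rhs => rw [hz]
    rw [map_sum, dotProduct]
    simp [hy, mul_comm]
  refine ⟨y, fun i => ?_, ?_⟩
  · rw [hrepr]
    refine hle _ ⟨fun j => if j = i then (1:ℝ) else 0,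
      fun j => by dsimp only; split <;> norm_num, ?_⟩
    simp [ite_smul]
  · rw [hrepr]; linarith

/-- Strong LP duality for the Benders subproblem.  If the primal
feasible set `{x | A x = d, x ≥ 0}` is nonempty with `c·x` bounded below on it,
and the dual feasible set `{α | Aᵀ α ≤ c}` is nonempty, then
`inf {c·x | A x = d, x ≥ 0} = sup {α·d | Aᵀ α ≤ c}`. -/
theorem benders_strong_duality
    (m n : ℕ)
    (A : Matrix (Fin m) (Fin n) ℝ) (d : Fin m → ℝ) (c : Fin n → ℝ)
    (hprimal : ∃ x : Fin n → ℝ, A.mulVec x = d ∧ ∀ i, 0 ≤ x i)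
    (hbdd : BddBelow {v : ℝ | ∃ x : Fin n → ℝ,
        A.mulVec x = d ∧ (∀ i, 0 ≤ x i) ∧ v = c ⬝ᵥ x})
    (hdual : ∃ α : Fin m → ℝ, A.transpose.mulVec α ≤ c) :
    sInf {v : ℝ | ∃ x : Fin n → ℝ, A.mulVec x = d ∧ (∀ i, 0 ≤ x i) ∧ v = c ⬝ᵥ x}
      = sSup {w : ℝ | ∃ α : Fin m → ℝ, A.transpose.mulVec α ≤ c ∧ w = α ⬝ᵥ d} := by
  set P := {v : ℝ | ∃ x : Fin n → ℝ, A.mulVec x = d ∧ (∀ i, 0 ≤ x i) ∧ v = c ⬝ᵥ x} with hP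
  set D := {w : ℝ | ∃ α : Fin m → ℝ, A.transpose.mulVec α ≤ c ∧ w = α ⬝ᵥ d} with hD
  obtain ⟨x₀, hx₀A, hx₀⟩ := hprimal
  obtain ⟨α₀, hα₀⟩ := hdual
  -- weak duality
  have weak : ∀ w ∈ D, ∀ v ∈ P, w ≤ v := by
    rintro w ⟨α, hα, rfl⟩ v ⟨x, hAx, hx, rfl⟩
    have h1 : α ⬝ᵥ d = A.transpose.mulVec α ⬝ᵥ x := by
      rw [← hAx, Matrix.dotProduct_mulVec, Matrix.mulVec_transpose]
    rw [h1, dotProduct, dotProduct]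
    exact Finset.sum_le_sum fun i _ => mul_le_mul_of_nonneg_right (hα i) (hx i)
  have hPne : P.Nonempty := ⟨c ⬝ᵥ x₀, x₀, hx₀A, hx₀, rfl⟩
  have hDne : D.Nonempty := ⟨α₀ ⬝ᵥ d, α₀, hα₀, rfl⟩
  have hDbdd : BddAbove D := ⟨c ⬝ᵥ x₀, fun w hw => weak w hw _ ⟨x₀, hx₀A, hx₀, rfl⟩⟩
  have hle : sSup D ≤ sInf P :=
    csSup_le hDne fun w hw => le_csInf hPne fun v hv => weak w hw v hv
  have hge : sInf P ≤ sSup D := by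
    refine le_of_forall_lt fun γ hγ => ?_
    -- Farkas family on `Fin (m+1)`-space, indexed by `Option (Fin n)`
    set vfam : Option (Fin n) → (Fin (m+1) → ℝ) := fun o =>
      Option.elim o (Pi.single (Fin.last m) 1)
        (fun j => Fin.snoc (fun i => A i j) (c j)) with hvfam
    set bb : Fin (m+1) → ℝ := Fin.snoc d γ with hbb
    have hnot : bb ∉ coneSet vfam := by
      rintro ⟨cf, hcf, hb⟩
      set x : Fin n → ℝ := fun j => cf (some j) with hxdef
      have hcoord : ∀ i : Fin (m+1),
          bb i = cf none * vfam none i + ∑ j, cf (some j) * vfam (some j) i := by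
        intro i
        rw [hb, Finset.sum_apply, Fintype.sum_option]
        simp [Pi.smul_apply, smul_eq_mul]
      have hAx : A.mulVec x = d := by
        funext i
        simpa [hbb, hvfam, Fin.snoc_castSucc, Pi.single_apply, hxdef,
          (Fin.castSucc_lt_last i).ne, Matrix.mulVec, dotProduct, mul_comm]
          using (hcoord (Fin.castSucc i)).symm
      have hlast := hcoord (Fin.last m)
      simp only [hbb, hvfam, Fin.snoc_last, Option.elim, Pi.single_eq_same, mul_one] at hlast
      have hcx : c ⬝ᵥ x ≤ γ := by
        rw [hlast, dotProduct]
        have : 0 ≤ cf none := hcf none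
        have h2 : ∑ i, c i * x i = ∑ j, cf (some j) * c j := by
          exact Finset.sum_congr rfl fun j _ => mul_comm _ _
        linarith [h2]
      have : sInf P ≤ c ⬝ᵥ x := csInf_le hbdd ⟨x, hAx, fun j => hcf (some j), rfl⟩
      linarith
    obtain ⟨y, hy, hyb⟩ := farkas vfam bb hnot
    set α : Fin m → ℝ := fun i => y (Fin.castSucc i) with hαdef
    set μ : ℝ := y (Fin.last m) with hμdef
    have hμ : μ ≤ 0 := by
      have := hy none
      simpa [hvfam, dotProduct_single, hμdef] using this
    have hcol : ∀ j, (∑ i, α i * A i j) + μ * c j ≤ 0 := by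
      intro j
      have := hy (some j)
      simpa [hvfam, dotProduct, Fin.sum_univ_castSucc, Fin.snoc_castSucc,
        Fin.snoc_last, hαdef, hμdef] using this
    have hyb' : 0 < (∑ i, α i * d i) + μ * γ := by
      simpa [hbb, dotProduct, Fin.sum_univ_castSucc, Fin.snoc_castSucc,
        Fin.snoc_last, hαdef, hμdef] using hyb
    rcases hμ.lt_or_eq with hlt | heq
    · -- μ < 0
      set β : Fin m → ℝ := fun i => α i / (-μ) with hβdef
      have hnμ : 0 < -μ := by linarith
      have hβ : A.transpose.mulVec β ≤ c := by
        intro j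
        have h1 : (A.transpose.mulVec β) j = (∑ i, α i * A i j) / (-μ) := by
          rw [Matrix.mulVec, dotProduct, Finset.sum_div]
          exact Finset.sum_congr rfl fun i _ => by
            rw [Matrix.transpose_apply, hβdef]; ring
        rw [h1, div_le_iff₀ hnμ]
        have := hcol j
        nlinarith
      have hval : γ < β ⬝ᵥ d := by
        rw [dotProduct]
        have h1 : ∑ i, β i * d i = (∑ i, α i * d i) / (-μ) := by
          rw [Finset.sum_div]
          exact Finset.sum_congr rfl fun i _ => by rw [hβdef]; ring
        rw [h1, lt_div_iff₀ hnμ]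
        nlinarith
      exact lt_of_lt_of_le hval (le_csSup hDbdd ⟨β, hβ, rfl⟩)
    · -- μ = 0 : dual unbounded, contradiction with weak duality
      exfalso
      have hαd : 0 < ∑ i, α i * d i := by rw [heq] at hyb'; simpa using hyb'
      have hcol0 : ∀ j, ∑ i, α i * A i j ≤ 0 := by
        intro j; have := hcol j; rw [heq] at this; simpa using this
      set t : ℝ := max 0 ((c ⬝ᵥ x₀ - α₀ ⬝ᵥ d) / (∑ i, α i * d i) + 1) with htdef
      have ht0 : 0 ≤ t := le_max_left _ _
      have hfeas : A.transpose.mulVec (α₀ + t • α) ≤ c := by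
        intro j
        have h1 : (A.transpose.mulVec (α₀ + t • α)) j
            = (A.transpose.mulVec α₀) j + t * ∑ i, α i * A i j := by
          rw [Matrix.mulVec, Matrix.mulVec, dotProduct, dotProduct, Finset.mul_sum,
            ← Finset.sum_add_distrib]
          exact Finset.sum_congr rfl fun i _ => by
            simp [Matrix.transpose_apply]; ring
        rw [h1]
        have := mul_nonpos_of_nonneg_of_nonpos ht0 (hcol0 j)
        have := hα₀ j
        linarith
      have hmem : (α₀ + t • α) ⬝ᵥ d ∈ D := ⟨_, hfeas, rfl⟩
      have hbig : c ⬝ᵥ x₀ < (α₀ + t • α) ⬝ᵥ d := by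
        have h1 : (α₀ + t • α) ⬝ᵥ d = α₀ ⬝ᵥ d + t * ∑ i, α i * d i := by
          rw [dotProduct, dotProduct, Finset.mul_sum, ← Finset.sum_add_distrib]
          exact Finset.sum_congr rfl fun i _ => by simp; ring
        rw [h1]
        have h2 : (c ⬝ᵥ x₀ - α₀ ⬝ᵥ d) / (∑ i, α i * d i) + 1 ≤ t := le_max_right _ _
        have h3 : (c ⬝ᵥ x₀ - α₀ ⬝ᵥ d) / (∑ i, α i * d i) <  t := by linarith
        have h4 : c ⬝ᵥ x₀ - α₀ ⬝ᵥ d < t * ∑ i, α i * d i := by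
          rw [div_lt_iff₀ hαd] at h3; linarith
        linarith
      exact absurd (weak _ hmem _ ⟨x₀, hx₀A, hx₀, rfl⟩) (not_le.mpr hbig)
  linarith
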